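/- arXiv:1906.06265 — 4 statements merged into one kernel-verified Lean document; each statement's English description precedes it below -/
import Mathlib

section
/- Let S be a factorial (unique factorization) semidomain with semifield of fractions F, and let p be a prime element of S. Then the order function ord_p : F \ {0} → ℤ is logarithmic: ord_p(xy) = ord_p(x) + ord_p(y) for all nonzero x, y ∈ F. -/
open Polynomial

/-- `ord` is an order function at the prime `p` on the semifield of fractions `F` of `S`:
for every nonzero `a ∈ F`, `a = p ^ (ord a) * (x / y)` where `p` divides neither the
numerator `x` nor the denominator `y`. (`ord_p(0)` is `∞` by convention and is not
constrained here.) -/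
def IsOrd {S F : Type*} [CommSemiring S] [Semifield F] [Algebra S F]
    (p : S) (ord : F → ℤ) : Prop :=
  ∀ a : F, a ≠ 0 → ∃ x y : S, ¬ p ∣ x ∧ ¬ p ∣ y ∧ y ≠ 0 ∧
    a = (algebraMap S F p) ^ (ord a) * (algebraMap S F x / algebraMap S F y)

private lemma ord_helper {S F : Type*} [CommSemiring S] [IsCancelMulZero S]
    [Semifield F] [Algebra S F]
    (inj : Function.Injective (algebraMap S F)) {p A B : S} (_hp : Prime p)
    (_hA : ¬ p ∣ A) (hB : ¬ p ∣ B) :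
    ∀ d : ℤ, 0 ≤ d →
      (algebraMap S F p) ^ d * algebraMap S F A = algebraMap S F B → d = 0 := by
  intro d hd h
  lift d to ℕ using hd
  rw [zpow_natCast, ← map_pow, ← map_mul] at h
  have h2 : p ^ d * A = B := inj h
  by_contra hne
  have hd0 : d ≠ 0 := by omega
  exact hB (h2 ▸ dvd_mul_of_dvd_left (dvd_pow_self p hd0) A)

private lemma ord_helper' {S F : Type*} [CommSemiring S] [IsCancelMulZero S]
    [Semifield F] [Algebra S F]
    (inj : Function.Injective (algebraMap S F)) {p A B : S} (hp : Prime p)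
    (hA : ¬ p ∣ A) (hB : ¬ p ∣ B) (d : ℤ)
    (h : (algebraMap S F p) ^ d * algebraMap S F A = algebraMap S F B) : d = 0 := by
  have hP : (algebraMap S F p) ≠ 0 := fun h0 => hp.ne_zero (inj (by simp [h0]))
  rcases le_or_gt 0 d with hd | hd
  · exact ord_helper inj hp hA hB d hd h
  · exfalso
    have h' : (algebraMap S F p) ^ (-d) * algebraMap S F B = algebraMap S F A := by
      rw [← h, ← mul_assoc, ← zpow_add₀ hP, neg_add_cancel, zpow_zero, one_mul]
    have := ord_helper inj hp hB hA (-d) (by omega) h'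
    omega

/-- In a factorial semidomain `S` with semifield of fractions `F`, the order function at a
prime `p` is logarithmic: `ord_p (x * y) = ord_p x + ord_p y` for nonzero `x, y ∈ F`. -/
theorem ord_mul {S F : Type*} [CommSemiring S] [IsCancelMulZero S]
    [Semifield F] [Algebra S F] [IsLocalization (nonZeroDivisors S) F]
    (hFact1 : ∀ s : S, Irreducible s → Prime s)
    (hFact2 : ∀ s : S, s ≠ 0 → ¬ IsUnit s →
      ∃ m : Multiset S, (∀ t ∈ m, Irreducible t) ∧ m.prod = s)
    (p : S) (hp : Prime p) (ord : F → ℤ) (hord : IsOrd p ord)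
    (x y : F) (hx : x ≠ 0) (hy : y ≠ 0) :
    ord (x * y) = ord x + ord y := by
  have inj : Function.Injective (algebraMap S F) := by
    intro a b h
    obtain ⟨c, hc⟩ := (IsLocalization.eq_iff_exists (nonZeroDivisors S) F).mp h
    rcases eq_or_ne (c : S) 0 with h0 | h0
    · have h1 : (1 : S) = 0 := c.2.2 1 (by rw [h0, mul_zero])
      rw [← one_mul a, ← one_mul b, h1, zero_mul, zero_mul]
    · exact mul_left_cancel₀ h0 hc
  have fne : ∀ t : S, t ≠ 0 → algebraMap S F t ≠ 0 := fun t ht h0 => ht (inj (by simp [h0]))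
  have hP : (algebraMap S F p) ≠ 0 := fne p hp.ne_zero
  obtain ⟨u, v, hu, hv, hv0, h1⟩ := hord x hx
  obtain ⟨s, t, hs, ht, ht0, h2⟩ := hord y hy
  obtain ⟨w, z, hw, hz, hz0, h3⟩ := hord (x * y) (mul_ne_zero hx hy)
  set P := algebraMap S F p with hPdef
  set U := algebraMap S F u; set V := algebraMap S F v
  set Sf := algebraMap S F s; set T := algebraMap S F t
  set W := algebraMap S F w; set Z := algebraMap S F z
  set a := ord x; set b := ord y; set c := ord (x * y)
  have A1 : x * V = P ^ a * U := by
    rw [h1, mul_assoc, div_mul_cancel₀ _ (fne v hv0)]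
  have A2 : y * T = P ^ b * Sf := by
    rw [h2, mul_assoc, div_mul_cancel₀ _ (fne t ht0)]
  have A3 : x * y * Z = P ^ c * W := by
    rw [h3, mul_assoc, div_mul_cancel₀ _ (fne z hz0)]
  have step : P ^ c * (W * V * T) = P ^ (a + b) * (U * Sf * Z) := by
    calc P ^ c * (W * V * T) = (x * y * Z) * (V * T) := by rw [A3]; ring
      _ = (x * V) * (y * T) * Z := by ring
      _ = (P ^ a * U) * (P ^ b * Sf) * Z := by rw [A1, A2]
      _ = P ^ (a + b) * (U * Sf * Z) := by rw [zpow_add₀ hP]; ring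
  have hPab : P ^ (a + b) ≠ 0 := zpow_ne_zero _ hP
  have key : P ^ (c - (a + b)) * (W * V * T) = U * Sf * Z := by
    calc P ^ (c - (a + b)) * (W * V * T) = P ^ c * (W * V * T) / P ^ (a + b) := by
          rw [zpow_sub₀ hP, div_mul_eq_mul_div]
      _ = P ^ (a + b) * (U * Sf * Z) / P ^ (a + b) := by rw [step]
      _ = U * Sf * Z := mul_div_cancel_left₀ _ hPab
  have hA : ¬ p ∣ w * v * t := fun hdvd => by
    rcases hp.dvd_mul.mp hdvd with h' | h'
    · rcases hp.dvd_mul.mp h' with h'' | h'' <;> [exact hw h''; exact hv h'']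
    · exact ht h'
  have hB : ¬ p ∣ u * s * z := fun hdvd => by
    rcases hp.dvd_mul.mp hdvd with h' | h'
    · rcases hp.dvd_mul.mp h' with h'' | h'' <;> [exact hu h''; exact hs h'']
    · exact hz h'
  have := ord_helper' inj hp hA hB (c - (a + b)) (by rw [map_mul, map_mul, map_mul, map_mul]; exact key)
  omega
end

section
/- Let S be a factorial semidomain with semifield of fractions F. For every nonzero polynomial f ∈ F[X], there exist c ∈ F and f₁ ∈ F[X] such that f = c·f₁, c is a content of f, all coefficients of f₁ lie in S, and a gcd of the coefficients of f₁ is 1. -/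
open Polynomial

/-- The order of a polynomial at a prime: the minimum of `ord` over the nonzero
coefficients, with value `⊤` (i.e. `∞`) for the zero polynomial. -/
def ordPoly {F : Type*} [Semifield F] (ord : F → ℤ) (f : Polynomial F) : WithTop ℤ :=
  f.support.inf fun i => ((ord (f.coeff i) : ℤ) : WithTop ℤ)

/-- `c` is a content for the polynomial `f` over the semifield of fractions `F` of `S`:
the content of the zero polynomial is `0`, and for `f ≠ 0` the content is a nonzero
element whose order at every prime `p` of `S` equals `ord_p(f)`, the minimum of the
orders of the nonzero coefficients of `f` (this characterizes `∏ p ^ ord_p(f)` up to a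
unit of `S`). -/
def IsContent {S F : Type*} [CommSemiring S] [Semifield F] [Algebra S F]
    (f : Polynomial F) (c : F) : Prop :=
  (f = 0 → c = 0) ∧ (f ≠ 0 → c ≠ 0 ∧ ∀ (p : S) (ordp : F → ℤ), Prime p → IsOrd p ordp →
    ((ordp c : ℤ) : WithTop ℤ) = ordPoly ordp f)

section AuxLemmas

theorem myNZD (S : Type*) [CommSemiring S] [IsCancelMulZero S] : NoZeroDivisors S :=
  ⟨fun {a b} hab => by
    by_cases ha : a = 0
    · exact Or.inl ha
    · exact Or.inr (mul_left_cancel₀ ha (hab.trans (mul_zero a).symm))⟩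

variable {S F : Type*} [CommSemiring S] [IsCancelMulZero S]
    [Semifield F] [Algebra S F] [IsLocalization (nonZeroDivisors S) F]
    {p : S} {ordp : F → ℤ}

theorem myInj : Function.Injective (algebraMap S F) := by
  intro a b h
  obtain ⟨c, hc⟩ := (IsLocalization.eq_iff_exists (nonZeroDivisors S) F).mp h
  by_cases hc0 : (c : S) = 0
  · have h1 : (1 : S) = 0 := c.2.2 1 (by rw [hc0, mul_zero])
    calc a = 1 * a := (one_mul a).symm
    _ = 1 * b := by rw [h1, zero_mul, zero_mul]
    _ = b := one_mul b
  · exact mul_left_cancel₀ hc0 hc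

theorem myMapNe {s : S} (hs : s ≠ 0) : algebraMap S F s ≠ 0 := fun h =>
  hs (myInj (h.trans (map_zero _).symm))

theorem rep_clear (hp : p ≠ 0) {v : ℤ} {x y : S} (hy : y ≠ 0) {a : F}
    (heq : a = (algebraMap S F p) ^ v * (algebraMap S F x / algebraMap S F y)) :
    a * algebraMap S F (p ^ (-v).toNat * y) = algebraMap S F (p ^ v.toNat * x) := by
  have hP : algebraMap S F p ≠ 0 := myMapNe hp
  have hY : algebraMap S F y ≠ 0 := myMapNe hy
  have hkey : (algebraMap S F p) ^ v * (algebraMap S F p) ^ ((-v).toNat) =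
      (algebraMap S F p) ^ (v.toNat) := by
    rw [← zpow_natCast (algebraMap S F p) ((-v).toNat), ← zpow_natCast (algebraMap S F p) v.toNat,
      ← zpow_add₀ hP]
    congr 1
    omega
  rw [heq, map_mul, map_mul, map_pow, map_pow, mul_mul_mul_comm, hkey,
    div_mul_cancel₀ _ hY]

theorem pow_cancel_aux (hp : Prime p) {A B : ℕ} {u w : S} (hlt : A < B)
    (h : p ^ A * u = p ^ B * w) (hu : ¬ p ∣ u) : False := by
  haveI := myNZD S
  have hB : p ^ B = p ^ A * p ^ (B - A) := by rw [← pow_add]; congr 1; omega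
  rw [hB, mul_assoc] at h
  have hu' : u = p ^ (B - A) * w := mul_left_cancel₀ (pow_ne_zero A hp.ne_zero) h
  exact hu ⟨p ^ (B - A - 1) * w, by rw [hu', ← mul_assoc, ← pow_succ']; congr 2; omega⟩

theorem ord_uniq (hp : Prime p) (hord : IsOrd p ordp) {a : F} (ha : a ≠ 0)
    {v : ℤ} {x y : S} (hx : ¬ p ∣ x) (hy : ¬ p ∣ y) (hy0 : y ≠ 0)
    (heq : a = (algebraMap S F p) ^ v * (algebraMap S F x / algebraMap S F y)) :
    ordp a = v := by
  obtain ⟨x', y', hx', hy', hy0', heq'⟩ := hord a ha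
  have h1 := rep_clear hp.ne_zero hy0' heq'
  have h2 := rep_clear hp.ne_zero hy0 heq
  have hS : (p ^ (ordp a).toNat * x') * (p ^ (-v).toNat * y) =
      (p ^ v.toNat * x) * (p ^ (-(ordp a)).toNat * y') := by
    apply myInj (F := F)
    rw [map_mul (algebraMap S F) (p ^ (ordp a).toNat * x'),
      map_mul (algebraMap S F) (p ^ v.toNat * x), ← h1, ← h2]
    ring
  have hS' : p ^ ((ordp a).toNat + (-v).toNat) * (x' * y) =
      p ^ (v.toNat + (-(ordp a)).toNat) * (x * y') := by
    rw [pow_add, pow_add]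
    conv_lhs => rw [mul_mul_mul_comm]
    conv_rhs => rw [mul_mul_mul_comm]
    exact hS
  have hnd1 : ¬ p ∣ x' * y := fun h => (hp.2.2 _ _ h).elim hx' hy
  have hnd2 : ¬ p ∣ x * y' := fun h => (hp.2.2 _ _ h).elim hx hy'
  rcases lt_trichotomy ((ordp a).toNat + (-v).toNat) (v.toNat + (-(ordp a)).toNat) with h | h | h
  · exact (pow_cancel_aux hp h hS' hnd1).elim
  · omega
  · exact (pow_cancel_aux hp h hS'.symm hnd2).elim

theorem ord_mul_s4 (hp : Prime p) (hord : IsOrd p ordp) {a b : F} (ha : a ≠ 0) (hb : b ≠ 0) :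
    ordp (a * b) = ordp a + ordp b := by
  haveI := myNZD S
  obtain ⟨x1, y1, hx1, hy1, hy10, h1⟩ := hord a ha
  obtain ⟨x2, y2, hx2, hy2, hy20, h2⟩ := hord b hb
  refine ord_uniq hp hord (mul_ne_zero ha hb)
    (fun h => (hp.2.2 _ _ h).elim hx1 hx2)
    (fun h => (hp.2.2 _ _ h).elim hy1 hy2)
    (mul_ne_zero hy10 hy20) ?_
  conv_lhs => rw [h1, h2]
  conv_rhs => rw [map_mul, map_mul, ← div_mul_div_comm,
    zpow_add₀ (myMapNe (F := F) hp.ne_zero)]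
  ring

theorem ord_div (hp : Prime p) (hord : IsOrd p ordp) {a b : F} (ha : a ≠ 0) (hb : b ≠ 0) :
    ordp (a / b) = ordp a - ordp b := by
  have h := ord_mul_s4 hp hord (div_ne_zero ha hb) hb
  rw [div_mul_cancel₀ _ hb] at h
  omega

theorem ord_nonneg (hp : Prime p) (hord : IsOrd p ordp) {s : S} (hs : s ≠ 0) :
    0 ≤ ordp (algebraMap S F s) := by
  obtain ⟨x, y, hx, hy, hy0, heq⟩ := hord _ (myMapNe hs)
  have h := rep_clear hp.ne_zero hy0 heq
  set v := ordp (algebraMap S F s) with hv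
  by_contra hneg
  push_neg at hneg
  have hS : s * (p ^ (-v).toNat * y) = p ^ v.toNat * x := by
    apply myInj (F := F)
    rw [map_mul, ← h, map_mul]
  have hv0 : v.toNat = 0 := by omega
  rw [hv0, pow_zero, one_mul] at hS
  refine hx ⟨p ^ ((-v).toNat - 1) * (s * y), ?_⟩
  rw [← hS]
  conv_lhs => rw [show (-v).toNat = 1 + ((-v).toNat - 1) by omega]
  rw [pow_add, pow_one]
  ring

theorem ord_zero_of_not_dvd (hp : Prime p) (hord : IsOrd p ordp) {s : S} (hs : s ≠ 0)
    (hnd : ¬ p ∣ s) : ordp (algebraMap S F s) = 0 := by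
  have h10 : (1 : S) ≠ 0 := fun h =>
    one_ne_zero (α := F) (by rw [← (algebraMap S F).map_one, h, map_zero])
  refine ord_uniq hp hord (myMapNe hs) hnd
    (fun h => hp.2.1 (isUnit_of_dvd_one h)) h10 ?_
  simp

end AuxLemmas

theorem gcd_aux {S : Type*} [CommSemiring S] [IsCancelMulZero S] [Nontrivial S]
    (hFact1 : ∀ s : S, Irreducible s → Prime s)
    (hFact2 : ∀ s : S, s ≠ 0 → ¬ IsUnit s →
      ∃ m : Multiset S, (∀ t ∈ m, Irreducible t) ∧ m.prod = s) :
    ∀ (n : ℕ) (m : Multiset S), Multiset.card m ≤ n → (∀ t ∈ m, Irreducible t) →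
    ∀ (b : ℕ → S) (i0 : ℕ) (u : S), IsUnit u → b i0 = u * m.prod →
    ∃ (g : S) (B : ℕ → S), g ≠ 0 ∧ (∀ i, b i = g * B i) ∧
      (∀ d : S, (∀ i, d ∣ B i) → IsUnit d) := by
  haveI := myNZD S
  haveI := Classical.decEq S
  intro n
  induction n with
  | zero =>
    intro m hcard hm b i0 u hu hb0
    have hm0 : m = 0 := Multiset.card_eq_zero.mp (Nat.le_zero.mp hcard)
    refine ⟨1, b, one_ne_zero, fun i => (one_mul _).symm, ?_⟩
    intro d hd
    have hbi0 : b i0 = u := by rw [hb0, hm0, Multiset.prod_zero, mul_one]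
    exact isUnit_of_dvd_unit (hbi0 ▸ hd i0) hu
  | succ n ih =>
    intro m hcard hm b i0 u hu hb0
    by_cases hcom : ∃ q : S, Prime q ∧ ∀ i, q ∣ b i
    · obtain ⟨q, hq, hqd⟩ := hcom
      have hqm : q ∣ m.prod := by
        rcases hq.2.2 u m.prod (hb0 ▸ hqd i0) with h | h
        · exact absurd (isUnit_of_dvd_unit h hu) hq.not_unit
        · exact h
      obtain ⟨t, htm, hqt⟩ := hq.exists_mem_multiset_dvd hqm
      obtain ⟨w, hw⟩ := hqt
      have hwu : IsUnit w := ((hm t htm).isUnit_or_isUnit hw).resolve_left hq.not_unit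
      have hc : ∀ i, ∃ s, b i = q * s := hqd
      choose B0 hB0 using hc
      have hB0i0 : B0 i0 = (u * w) * (m.erase t).prod := by
        apply mul_left_cancel₀ hq.ne_zero
        rw [← hB0 i0, hb0, ← Multiset.prod_erase htm, hw]
        ring
      obtain ⟨g', B', hg', hbB, hdiv⟩ := ih (m.erase t)
        (by rw [Multiset.card_erase_of_mem htm, Nat.pred_eq_sub_one]; omega)
        (fun t' ht' => hm t' (Multiset.mem_of_mem_erase ht'))
        B0 i0 (u * w) (hu.mul hwu) hB0i0
      exact ⟨q * g', B', mul_ne_zero hq.ne_zero hg',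
        fun i => by rw [hB0 i, hbB i, mul_assoc], hdiv⟩
    · refine ⟨1, b, one_ne_zero, fun i => (one_mul _).symm, ?_⟩
      intro d hd
      by_contra hdu
      have hbi0 : b i0 ≠ 0 := by
        rw [hb0]
        exact mul_ne_zero hu.ne_zero
          (Multiset.prod_ne_zero fun h0 => (hm 0 h0).ne_zero rfl)
      have hd0 : d ≠ 0 := fun h => hbi0 (zero_dvd_iff.mp (h ▸ hd i0))
      obtain ⟨md, hmd, hmdp⟩ := hFact2 d hd0 hdu
      have hmd0 : md ≠ 0 := fun h => hdu (by rw [← hmdp, h, Multiset.prod_zero]; exact isUnit_one)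
      obtain ⟨q, hqmd⟩ := Multiset.exists_mem_of_ne_zero hmd0
      exact hcom ⟨q, hFact1 q (hmd q hqmd),
        fun i => dvd_trans (hmdp ▸ Multiset.dvd_prod hqmd) (hd i)⟩


/-- In a factorial semidomain `S` with semifield of fractions `F`, every nonzero
`f ∈ F[X]` factors as `f = c • f₁` where `c` is a content of `f`, all coefficients of
`f₁` lie in `S`, and a gcd of the coefficients of `f₁` is `1` (i.e. every common
divisor of the coefficients is a unit). -/
theorem exists_content_factorization {S F : Type*} [CommSemiring S] [IsCancelMulZero S]
    [Semifield F] [Algebra S F] [IsLocalization (nonZeroDivisors S) F]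
    (hFact1 : ∀ s : S, Irreducible s → Prime s)
    (hFact2 : ∀ s : S, s ≠ 0 → ¬ IsUnit s →
      ∃ m : Multiset S, (∀ t ∈ m, Irreducible t) ∧ m.prod = s)
    (f : Polynomial F) (hf : f ≠ 0) :
    ∃ (c : F) (f₁ : Polynomial F), IsContent (S := S) f c ∧ f = Polynomial.C c * f₁ ∧
      ∃ a : ℕ → S, (∀ i, algebraMap S F (a i) = f₁.coeff i) ∧
        ∀ d : S, (∀ i, d ∣ a i) → IsUnit d := by
  haveI := myNZD S
  haveI : Nontrivial S := ⟨0, 1, fun h =>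
    zero_ne_one (α := F) (by rw [← map_zero (algebraMap S F), h, map_one])⟩
  obtain ⟨i0, hi0⟩ := Polynomial.support_nonempty.mpr hf
  obtain ⟨y, hy⟩ := IsLocalization.exist_integer_multiples (nonZeroDivisors S) f.support f.coeff
  have hbex : ∀ i, ∃ s : S, algebraMap S F s = algebraMap S F (y : S) * f.coeff i := by
    intro i
    by_cases h : i ∈ f.support
    · obtain ⟨s, hs⟩ := hy i h
      exact ⟨s, by rw [hs, Algebra.smul_def]⟩
    · exact ⟨0, by rw [Polynomial.notMem_support_iff.mp h, map_zero, mul_zero]⟩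
  choose b hb using hbex
  have hy0 : (y : S) ≠ 0 := nonZeroDivisors.coe_ne_zero y
  have hYF : algebraMap S F (y : S) ≠ 0 := myMapNe hy0
  have hbsupp : ∀ i ∈ f.support, b i ≠ 0 := by
    intro i hi hbz
    have h0 : algebraMap S F (y : S) * f.coeff i = 0 := by rw [← hb i, hbz, map_zero]
    exact Polynomial.mem_support_iff.mp hi ((mul_eq_zero.mp h0).resolve_left hYF)
  have hbi0 : b i0 ≠ 0 := hbsupp i0 hi0
  obtain ⟨u, m, hu, hm, hprod⟩ : ∃ (u : S) (m : Multiset S), IsUnit u ∧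
      (∀ t ∈ m, Irreducible t) ∧ b i0 = u * m.prod := by
    by_cases hbu : IsUnit (b i0)
    · exact ⟨b i0, 0, hbu, by simp, by simp⟩
    · obtain ⟨m, hm', hp'⟩ := hFact2 (b i0) hbi0 hbu
      exact ⟨1, m, isUnit_one, hm', by rw [one_mul, hp']⟩
  obtain ⟨g, B, hg0, hgB, hBd⟩ :=
    gcd_aux hFact1 hFact2 (Multiset.card m) m le_rfl hm b i0 u hu hprod
  have hGF : algebraMap S F g ≠ 0 := myMapNe hg0
  refine ⟨algebraMap S F g / algebraMap S F (y : S),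
    Polynomial.C (algebraMap S F (y : S) / algebraMap S F g) * f, ?_, ?_, B, ?_, hBd⟩
  · constructor
    · exact fun h => absurd h hf
    · intro _
      refine ⟨div_ne_zero hGF hYF, ?_⟩
      intro p ordp hp hord
      have hOc : ordp (algebraMap S F g / algebraMap S F (y : S)) =
          ordp (algebraMap S F g) - ordp (algebraMap S F (y : S)) := ord_div hp hord hGF hYF
      have hcoeffeq : ∀ i ∈ f.support, f.coeff i =
          algebraMap S F (b i) / algebraMap S F (y : S) := by
        intro i hi
        rw [eq_div_iff hYF, mul_comm, ← hb i]
      have hObig : ∀ i ∈ f.support, ordp (f.coeff i) =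
          ordp (algebraMap S F (b i)) - ordp (algebraMap S F (y : S)) := by
        intro i hi
        rw [hcoeffeq i hi]
        exact ord_div hp hord (myMapNe (hbsupp i hi)) hYF
      have hBne : ∀ i ∈ f.support, B i ≠ 0 := fun i hi hBz =>
        hbsupp i hi (by rw [hgB i, hBz, mul_zero])
      have hObg : ∀ i ∈ f.support, ordp (algebraMap S F (b i)) =
          ordp (algebraMap S F g) + ordp (algebraMap S F (B i)) := by
        intro i hi
        rw [hgB i, map_mul]
        exact ord_mul_s4 hp hord hGF (myMapNe (hBne i hi))
      obtain ⟨i1, hpi1⟩ : ∃ i, ¬ p ∣ B i := by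
        by_contra h
        push_neg at h
        exact hp.not_unit (hBd p h)
      have hBi1 : B i1 ≠ 0 := fun h => hpi1 (h ▸ dvd_zero p)
      have hbi1 : b i1 ≠ 0 := by rw [hgB i1]; exact mul_ne_zero hg0 hBi1
      have hi1supp : i1 ∈ f.support := by
        rw [Polynomial.mem_support_iff]
        intro hz
        exact hbi1 (myInj (F := F) (by rw [hb i1, hz, mul_zero, map_zero]))
      unfold ordPoly
      apply le_antisymm
      · apply Finset.le_inf
        intro i hi
        have h1 := hObig i hi
        have h2 := hObg i hi
        have h3 := ord_nonneg hp hord (hBne i hi)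
        exact WithTop.coe_le_coe.mpr (by omega)
      · refine le_trans (Finset.inf_le hi1supp) (le_of_eq ?_)
        have h1 := hObig i1 hi1supp
        have h2 := hObg i1 hi1supp
        have h3 := ord_zero_of_not_dvd hp hord hBi1 hpi1
        exact congrArg _ (by omega)
  · rw [← mul_assoc, ← Polynomial.C_mul, div_mul_div_comm,
      mul_comm (algebraMap S F g) (algebraMap S F (y : S)), div_self (mul_ne_zero hYF hGF),
      Polynomial.C_1, one_mul]
  · intro i
    rw [Polynomial.coeff_C_mul, div_mul_eq_mul_div, ← hb i, hgB i, map_mul,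
      mul_div_cancel_left₀ _ hGF]
end

section
/- Let S be a subtractive factorial semidomain. If f, g ∈ S[X] are primitive polynomials (i.e., have content 1, equivalently the gcd of their coefficients is 1), then the product fg is also primitive. -/
/-- Over a subtractive factorial semidomain `S`, the product of primitive polynomials is
primitive, where `f ∈ S[X]` is primitive if no prime of `S` divides all its coefficients. -/
theorem primitive_mul {S : Type*} [CommSemiring S] [IsCancelMulZero S]
    (hSub : ∀ (I : Ideal S) (a b : S), a + b ∈ I → a ∈ I → b ∈ I)
    (hFact1 : ∀ s : S, Irreducible s → Prime s)
    (hFact2 : ∀ s : S, s ≠ 0 → ¬ IsUnit s →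
      ∃ m : Multiset S, (∀ t ∈ m, Irreducible t) ∧ m.prod = s)
    (f g : Polynomial S)
    (hf : ∀ p : S, Prime p → ∃ i, ¬ p ∣ f.coeff i)
    (hg : ∀ p : S, Prime p → ∃ i, ¬ p ∣ g.coeff i) :
    ∀ p : S, Prime p → ∃ i, ¬ p ∣ (f * g).coeff i := by
  classical
  intro p hp
  have hfe : ∃ n, ¬ p ∣ f.coeff n := hf p hp
  have hge : ∃ n, ¬ p ∣ g.coeff n := hg p hp
  set i := Nat.find hfe with hidef
  set j := Nat.find hge with hjdef
  have hfi : ¬ p ∣ f.coeff i := Nat.find_spec hfe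
  have hgj : ¬ p ∣ g.coeff j := Nat.find_spec hge
  have hfmin : ∀ k < i, p ∣ f.coeff k := fun k hk =>
    not_not.mp (Nat.find_min hfe hk)
  have hgmin : ∀ l < j, p ∣ g.coeff l := fun l hl =>
    not_not.mp (Nat.find_min hge hl)
  refine ⟨i + j, fun hdvd => ?_⟩
  have hmemd : (i, j) ∈ Finset.HasAntidiagonal.antidiagonal (i + j) := Finset.HasAntidiagonal.mem_antidiagonal.mpr rfl
  have hsum : p ∣ ∑ x ∈ (Finset.HasAntidiagonal.antidiagonal (i + j)).erase (i, j),
      f.coeff x.1 * g.coeff x.2 := by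
    refine Finset.dvd_sum ?_
    rintro ⟨k, l⟩ hx
    rw [Finset.mem_erase, Finset.HasAntidiagonal.mem_antidiagonal] at hx
    obtain ⟨hne, hkl⟩ := hx
    rcases lt_or_ge k i with h | h
    · exact (hfmin k h).mul_right _
    · have hl : l < j := by
        rcases eq_or_lt_of_le h with h' | h'
        · exfalso; apply hne; subst h'
          have : l = j := by omega
          rw [this]
        · omega
      exact (hgmin l hl).mul_left _
  have heq : (f * g).coeff (i + j) = f.coeff i * g.coeff j +
      ∑ x ∈ (Finset.HasAntidiagonal.antidiagonal (i + j)).erase (i, j), f.coeff x.1 * g.coeff x.2 := by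
    rw [Polynomial.coeff_mul]
    exact (Finset.add_sum_erase _ (fun x => f.coeff x.1 * g.coeff x.2) hmemd).symm
  have hmem : f.coeff i * g.coeff j ∈ Ideal.span {p} := by
    apply hSub (Ideal.span {p}) _ _ _ (Ideal.mem_span_singleton.mpr hsum)
    rw [add_comm, ← heq]
    exact Ideal.mem_span_singleton.mpr hdvd
  rcases hp.2.2 _ _ (Ideal.mem_span_singleton.mp hmem) with h | h
  · exact hfi h
  · exact hgj h
end

section
/- Let S be a subtractive factorial semidomain and p a prime element of S. Let f = Σ a_i X^i and g = Σ b_j X^j be polynomials in S[X] such that p does not divide all coefficients of f and p does not divide all coefficients of g. Let r be the largest index with p ∤ a_r and s the largest index with p ∤ b_s. Then p does not divide the coefficient of X^{r+s} in fg. -/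
/-- Over a subtractive factorial semidomain `S` with prime `p`: if `r` is the largest
index with `p ∤ a_r` (for `f = Σ a_i X^i`) and `s` is the largest index with `p ∤ b_s`
(for `g = Σ b_j X^j`), then `p` does not divide the coefficient of `X^(r+s)` in `f * g`. -/
theorem not_dvd_coeff_mul {S : Type*} [CommSemiring S] [IsCancelMulZero S]
    (hSub : ∀ (I : Ideal S) (a b : S), a + b ∈ I → a ∈ I → b ∈ I)
    (hFact1 : ∀ s : S, Irreducible s → Prime s)
    (hFact2 : ∀ s : S, s ≠ 0 → ¬ IsUnit s →
      ∃ m : Multiset S, (∀ t ∈ m, Irreducible t) ∧ m.prod = s)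
    (p : S) (hp : Prime p) (f g : Polynomial S) (r s : ℕ)
    (hr : ¬ p ∣ f.coeff r) (hr' : ∀ i, r < i → p ∣ f.coeff i)
    (hs : ¬ p ∣ g.coeff s) (hs' : ∀ j, s < j → p ∣ g.coeff j) :
    ¬ p ∣ (f * g).coeff (r + s) := by
  intro hdvd
  rw [Polynomial.coeff_mul] at hdvd
  have hmem : (r, s) ∈ Finset.HasAntidiagonal.antidiagonal (r + s) := by
    simp
  rw [← Finset.add_sum_erase _ _ hmem] at hdvd
  have hrest : p ∣ ∑ x ∈ (Finset.HasAntidiagonal.antidiagonal (r + s)).erase (r, s),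
      f.coeff x.1 * g.coeff x.2 := by
    apply Finset.dvd_sum
    intro x hx
    obtain ⟨hne, hx⟩ := Finset.mem_erase.mp hx
    rw [Finset.HasAntidiagonal.mem_antidiagonal] at hx
    rcases lt_or_ge r x.1 with h | h
    · exact Dvd.dvd.mul_right (hr' _ h) _
    · rcases eq_or_lt_of_le (show s ≤ x.2 by omega) with heq | hlt
      · exact absurd (Prod.ext (by omega) heq.symm) hne
      have : s < x.2 := hlt
      exact Dvd.dvd.mul_left (hs' _ this) _
  rw [add_comm] at hdvd
  have : f.coeff r * g.coeff s ∈ Ideal.span {p} := by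
    exact hSub (Ideal.span {p}) _ _ (Ideal.mem_span_singleton.mpr hdvd)
      (Ideal.mem_span_singleton.mpr hrest)
  rcases hp.dvd_mul.mp (Ideal.mem_span_singleton.mp this) with h | h
  · exact hr h
  · exact hs h
end
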